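/- Let c ∈ ℂ, let A and B be nonempty types, and let u : A → ℂ^M and s : B → ℂ^N be arbitrary functions. Define J(θ,ψ) := sup over unit-modulus vectors v ∈ ℂ^N of ‖ c · (Σ_{n=1}^N s(ψ)_n v_n) • u(θ) ‖². Then (i) J(θ,ψ) = |c|² · ‖u(θ)‖² · (Σ_{n=1}^N |s(ψ)_n|)² for all θ ∈ A and ψ ∈ B, and (ii) for all θ, θ₀ ∈ A and ψ, ψ₀ ∈ B, J(θ,ψ) · J(θ₀,ψ₀) = J(θ,ψ₀) · J(θ₀,ψ). -/

import Mathlib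

open scoped BigOperators

/-- The optimized far-field reflected-channel power: the supremum of
`‖(c * ∑ n, s ψ n * v n) • u θ‖²` over unit-modulus vectors `v ∈ ℂ^N`. -/
noncomputable def Jff {M N : ℕ} {A B : Type*} (c : ℂ)
    (u : A → EuclideanSpace ℂ (Fin M)) (s : B → Fin N → ℂ) (θ : A) (ψ : B) : ℝ :=
  sSup {x : ℝ | ∃ v : Fin N → ℂ, (∀ n, ‖v n‖ = 1) ∧
    x = ‖(c * ∑ n, s ψ n * v n) • u θ‖ ^ 2}

lemma Jff_greatest {M N : ℕ} {A B : Type*} (c : ℂ)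
    (u : A → EuclideanSpace ℂ (Fin M)) (s : B → Fin N → ℂ) (θ : A) (ψ : B) :
    IsGreatest {x : ℝ | ∃ v : Fin N → ℂ, (∀ n, ‖v n‖ = 1) ∧
      x = ‖(c * ∑ n, s ψ n * v n) • u θ‖ ^ 2}
      (‖c‖ ^ 2 * ‖u θ‖ ^ 2 * (∑ n, ‖s ψ n‖) ^ 2) := by
  constructor
  · refine ⟨fun n => if s ψ n = 0 then 1 else (starRingEnd ℂ) (s ψ n) / ((‖s ψ n‖ : ℝ) : ℂ), ?_, ?_⟩
    · intro n
      by_cases h : s ψ n = 0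
      · simp [h]
      · simp [h, map_div₀, Complex.norm_conj, div_self (norm_ne_zero_iff.mpr h)]
    · have key : (∑ n, s ψ n * (if s ψ n = 0 then 1 else (starRingEnd ℂ) (s ψ n) / ((‖s ψ n‖ : ℝ) : ℂ)))
          = ((∑ n, ‖s ψ n‖ : ℝ) : ℂ) := by
        push_cast
        refine Finset.sum_congr rfl fun n _ => ?_
        by_cases h : s ψ n = 0
        · simp [h]
        · rw [if_neg h, mul_div_assoc', Complex.mul_conj']
          have ha : (‖s ψ n‖) ≠ 0 := norm_ne_zero_iff.mpr h
          rw [sq, mul_div_assoc, div_self (by exact_mod_cast ha), mul_one]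
      rw [key, norm_smul]
      rw [mul_pow, norm_mul]
      have h1 : ‖((∑ n, ‖s ψ n‖ : ℝ) : ℂ)‖ = ∑ n, ‖s ψ n‖ := by
        rw [Complex.norm_real, Real.norm_of_nonneg (Finset.sum_nonneg fun n _ => norm_nonneg _)]
      rw [h1]
      ring
  · rintro x ⟨v, hv, rfl⟩
    rw [norm_smul, norm_mul]
    have hb : ‖∑ n, s ψ n * v n‖ ≤ ∑ n, ‖s ψ n‖ := by
      refine (norm_sum_le _ _).trans ?_
      refine Finset.sum_le_sum fun n _ => ?_
      rw [norm_mul, hv n, mul_one]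
    have h2 : (0:ℝ) ≤ ‖∑ n, s ψ n * v n‖ := norm_nonneg _
    calc (‖c‖ * ‖∑ n, s ψ n * v n‖ * ‖u θ‖) ^ 2
        = ‖c‖ ^ 2 * ‖u θ‖ ^ 2 * ‖∑ n, s ψ n * v n‖ ^ 2 := by ring
      _ ≤ ‖c‖ ^ 2 * ‖u θ‖ ^ 2 * (∑ n, ‖s ψ n‖) ^ 2 := by
          gcongr

/-- (i) the optimized far-field reflected-channel power factorizes as
`|c|² ‖u θ‖² (∑ n |s ψ n|)²`, and (ii) it is multiplicatively separable in `θ` and `ψ`. -/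
theorem far_field_separability {M N : ℕ} {A B : Type*} [Nonempty A] [Nonempty B]
    (c : ℂ) (u : A → EuclideanSpace ℂ (Fin M)) (s : B → Fin N → ℂ) :
    (∀ (θ : A) (ψ : B),
      Jff c u s θ ψ
        = ‖c‖ ^ 2 * ‖u θ‖ ^ 2 * (∑ n, ‖s ψ n‖) ^ 2) ∧
    (∀ (θ θ₀ : A) (ψ ψ₀ : B),
      Jff c u s θ ψ * Jff c u s θ₀ ψ₀ = Jff c u s θ ψ₀ * Jff c u s θ₀ ψ) := by
  have hJ : ∀ (θ : A) (ψ : B), Jff c u s θ ψ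
      = ‖c‖ ^ 2 * ‖u θ‖ ^ 2 * (∑ n, ‖s ψ n‖) ^ 2 :=
    fun θ ψ => (Jff_greatest c u s θ ψ).csSup_eq
  exact ⟨hJ, fun θ θ₀ ψ ψ₀ => by rw [hJ, hJ, hJ, hJ]; ring⟩
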